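/- Define Red(Z:A,B) = I(Z;A) − Uni(Z:A|B), where Uni(Z:A|B) = min_{Q ∈ Δ_p} I_Q(Z;A|B) and Δ_p is the set of joint distributions with the same (Z,A) and (Z,B) marginals as the true distribution P. Then Red(Z:A,B) ≥ 0. -/

import Mathlib

open scoped BigOperators

namespace PID

/-- `x * log (x / y)` with the convention `0 * log 0 = 0`. -/
noncomputable def ilog (x y : Real) : Real := if x = 0 then 0 else x * Real.log (x / y)

variable {A B C : Type*} [Fintype A] [Fintype B] [Fintype C]

/-- `p` is a joint probability distribution on a triple of finite alphabets. -/
def IsJointDist (p : A -> B -> C -> Real) : Prop :=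
  (forall x y z, 0 <= p x y z) /\ (Finset.sum Finset.univ fun x => Finset.sum Finset.univ fun y => Finset.sum Finset.univ fun z => p x y z) = 1

/-- Shannon mutual information (in nats) between the two coordinates of a finite joint pmf. -/
noncomputable def mi2 (p : A -> B -> Real) : Real :=
  Finset.sum Finset.univ fun x => Finset.sum Finset.univ fun y =>
    ilog (p x y) ((Finset.sum Finset.univ fun y' => p x y') * (Finset.sum Finset.univ fun x' => p x' y))

/-- Conditional mutual information `I(X;Y|Z)` (in nats) of a finite joint pmf on three alphabets. -/
noncomputable def cmi (p : A -> B -> C -> Real) : Real :=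
  Finset.sum Finset.univ fun x => Finset.sum Finset.univ fun y => Finset.sum Finset.univ fun z =>
    ilog (p x y z)
      ((Finset.sum Finset.univ fun y' => p x y' z) * (Finset.sum Finset.univ fun x' => p x' y z) /
        (Finset.sum Finset.univ fun x' => Finset.sum Finset.univ fun y' => p x' y' z))

/-- `q` agrees with `p` on the (1st,2nd)- and (1st,3rd)-marginals (the set `Delta_p`). -/
def SameMarg (p q : A -> B -> C -> Real) : Prop :=
  (forall x y, (Finset.sum Finset.univ fun z => q x y z) = Finset.sum Finset.univ fun z => p x y z) /\
  (forall x z, (Finset.sum Finset.univ fun y => q x y z) = Finset.sum Finset.univ fun y => p x y z)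

/-- Unique information `Uni(X : Y | Z)` (Bertschinger et al.):
the minimum of `I_Q(X;Y|Z)` over all `Q` in `Delta_p`. -/
noncomputable def Uni (p : A -> B -> C -> Real) : Real :=
  sInf {r : Real | exists q : A -> B -> C -> Real, IsJointDist q /\ SameMarg p q /\ r = cmi q}

/-- Redundant information `Red(X : Y, Z) = I(X;Y) - Uni(X : Y | Z)`. -/
noncomputable def Red (p : A -> B -> C -> Real) : Real :=
  mi2 (fun x y => Finset.sum Finset.univ fun z => p x y z) - Uni p

/-- Synergistic information `Syn(X : Y, Z) = I(X;Y|Z) - Uni(X : Y | Z)`. -/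
noncomputable def Syn (p : A -> B -> C -> Real) : Real :=
  cmi p - Uni p

end PID

open PID

open PID in
lemma PID.ilog_ge {x y : ℝ} (hx : 0 ≤ x) (hy : 0 ≤ y) (h : y = 0 → x = 0) :
    x - y ≤ ilog x y := by
  by_cases hx0 : x = 0
  · simp only [ilog, hx0, if_pos]; linarith
  · have hy0 : y ≠ 0 := fun h' => hx0 (h h')
    have hyp : 0 < y := hy.lt_of_ne (Ne.symm hy0)
    have hxp : 0 < x := hx.lt_of_ne (Ne.symm hx0)
    rw [ilog, if_neg hx0]
    have hlog : Real.log (y / x) ≤ y / x - 1 := Real.log_le_sub_one_of_pos (by positivity)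
    have hinv : Real.log (x / y) = - Real.log (y / x) := by
      rw [← Real.log_inv]; congr 1; field_simp
    have h3 : x * Real.log (y / x) ≤ x * (y / x - 1) := mul_le_mul_of_nonneg_left hlog hx
    have h4 : x * (y / x - 1) = y - x := by field_simp
    rw [hinv]; nlinarith

open PID in
lemma PID.sum_ilog_prod_nonneg {A B : Type*} [Fintype A] [Fintype B]
    (f : A → B → ℝ) (u : A → ℝ) (v : B → ℝ)
    (hf : ∀ a b, 0 ≤ f a b) (hu : ∀ a, 0 ≤ u a) (hv : ∀ b, 0 ≤ v b)
    (hside : ∀ a b, u a * v b = 0 → f a b = 0)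
    (h1 : (∑ a, ∑ b, f a b) = 1) (hu1 : (∑ a, u a) = 1) (hv1 : (∑ b, v b) = 1) :
    0 ≤ ∑ a, ∑ b, ilog (f a b) (u a * v b) := by
  have key : ∀ a b, f a b - u a * v b ≤ ilog (f a b) (u a * v b) := fun a b =>
    ilog_ge (hf a b) (mul_nonneg (hu a) (hv b)) (hside a b)
  have h2 : (∑ a, ∑ b, (f a b - u a * v b)) ≤ ∑ a, ∑ b, ilog (f a b) (u a * v b) :=
    Finset.sum_le_sum fun a _ => Finset.sum_le_sum fun b _ => key a b
  have h3 : (∑ a, ∑ b, (f a b - u a * v b)) = 0 := by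
    rw [Finset.sum_congr rfl fun a _ => Finset.sum_sub_distrib _ _, Finset.sum_sub_distrib, h1]
    have : (∑ a, ∑ b, u a * v b) = (∑ a, u a) * (∑ b, v b) := by
      rw [Finset.sum_mul]
      exact Finset.sum_congr rfl fun a _ => by rw [Finset.mul_sum]
    rw [this, hu1, hv1]; ring
  linarith

open PID in
lemma PID.cmi_nonneg {A B C : Type*} [Fintype A] [Fintype B] [Fintype C]
    (p : A → B → C → ℝ) (hp : IsJointDist p) : 0 ≤ cmi p := by
  obtain ⟨h0, h1⟩ := hp
  unfold cmi
  have hle1 : ∀ x y z, p x y z ≤ ∑ y', p x y' z := fun x y z =>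
    Finset.single_le_sum (fun i _ => h0 x i z) (Finset.mem_univ y)
  have hle2 : ∀ x y z, p x y z ≤ ∑ x', p x' y z := fun x y z =>
    Finset.single_le_sum (fun i _ => h0 i y z) (Finset.mem_univ x)
  have hleD : ∀ x y z, p x y z ≤ ∑ x', ∑ y', p x' y' z := fun x y z =>
    le_trans (hle1 x y z)
      (Finset.single_le_sum (f := fun x' => ∑ y', p x' y' z)
        (fun i _ => Finset.sum_nonneg fun j _ => h0 i j z) (Finset.mem_univ x))
  set w : A → B → C → ℝ := fun x y z =>
    (∑ y', p x y' z) * (∑ x', p x' y z) / (∑ x', ∑ y', p x' y' z) with hw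
  have hside : ∀ x y z, w x y z = 0 → p x y z = 0 := by
    intro x y z hwz
    by_cases hD : (∑ x', ∑ y', p x' y' z) = 0
    · exact le_antisymm (hD ▸ hleD x y z) (h0 x y z)
    · rw [hw] at hwz
      simp only [div_eq_zero_iff, hD, or_false, mul_eq_zero] at hwz
      rcases hwz with h' | h'
      · exact le_antisymm (h' ▸ hle1 x y z) (h0 x y z)
      · exact le_antisymm (h' ▸ hle2 x y z) (h0 x y z)
  have hw0 : ∀ x y z, 0 ≤ w x y z := by
    intro x y z
    have a1 : 0 ≤ ∑ y', p x y' z := Finset.sum_nonneg fun i _ => h0 x i z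
    have a2 : 0 ≤ ∑ x', p x' y z := Finset.sum_nonneg fun i _ => h0 i y z
    have a3 : 0 ≤ ∑ x', ∑ y', p x' y' z :=
      Finset.sum_nonneg fun i _ => Finset.sum_nonneg fun j _ => h0 i j z
    exact div_nonneg (mul_nonneg a1 a2) a3
  have key : ∀ x y z, p x y z - w x y z ≤ ilog (p x y z) (w x y z) := fun x y z =>
    ilog_ge (h0 x y z) (hw0 x y z) (hside x y z)
  have hwsum : ∀ z, (∑ x, ∑ y, w x y z) ≤ ∑ x, ∑ y, p x y z := by
    intro z
    by_cases hD : (∑ x', ∑ y', p x' y' z) = 0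
    · simp only [hw, hD, div_zero, Finset.sum_const_zero]
      exact le_refl 0
    · have e1 : ∀ x, (∑ y, w x y z)
          = (∑ y', p x y' z) * (∑ y, ∑ x', p x' y z) / (∑ x', ∑ y', p x' y' z) := by
        intro x; rw [hw]; simp only
        rw [← Finset.sum_div, ← Finset.mul_sum]
      have e2 : (∑ y, ∑ x', p x' y z) = (∑ x', ∑ y', p x' y' z) := Finset.sum_comm
      have : (∑ x, ∑ y, w x y z) = ∑ x', ∑ y', p x' y' z := by
        rw [Finset.sum_congr rfl fun x _ => e1 x]
        rw [e2, ← Finset.sum_div, ← Finset.sum_mul]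
        field_simp
      rw [this]
  have h2 : (∑ x, ∑ y, ∑ z, (p x y z - w x y z))
      ≤ ∑ x, ∑ y, ∑ z, ilog (p x y z) (w x y z) :=
    Finset.sum_le_sum fun x _ => Finset.sum_le_sum fun y _ =>
      Finset.sum_le_sum fun z _ => key x y z
  have h3 : 0 ≤ ∑ x, ∑ y, ∑ z, (p x y z - w x y z) := by
    have e : (∑ x, ∑ y, ∑ z, (p x y z - w x y z))
        = 1 - ∑ x, ∑ y, ∑ z, w x y z := by
      simp only [Finset.sum_sub_distrib, h1]
    rw [e, sub_nonneg]
    have hre : (∑ x, ∑ y, ∑ z, w x y z) = ∑ z, ∑ x, ∑ y, w x y z :=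
      (Finset.sum_congr rfl fun x _ => Finset.sum_comm).trans Finset.sum_comm
    have hre2 : (∑ x, ∑ y, ∑ z, p x y z) = ∑ z, ∑ x, ∑ y, p x y z :=
      (Finset.sum_congr rfl fun x _ => Finset.sum_comm).trans Finset.sum_comm
    rw [hre, ← h1, hre2]
    exact Finset.sum_le_sum fun z _ => hwsum z
  linarith

/-- The product-of-marginals-given-Z distribution `Q₀(z,a,b) = P(z,a)P(z,b)/P(z)`. -/
noncomputable def q0 {Z A B : Type*} [Fintype Z] [Fintype A] [Fintype B]
    (p : Z → A → B → ℝ) : Z → A → B → ℝ :=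
  fun z a b => (∑ b', p z a b') * (∑ a', p z a' b) / (∑ a', ∑ b', p z a' b')

section Q0
variable {Z A B : Type*} [Fintype Z] [Fintype A] [Fintype B]
variable (p : Z → A → B → ℝ)

lemma q0_nonneg (hp0 : ∀ z a b, 0 ≤ p z a b) : ∀ z a b, 0 ≤ q0 p z a b := by
  intro z a b
  have a1 : 0 ≤ ∑ b', p z a b' := Finset.sum_nonneg fun i _ => hp0 z a i
  have a2 : 0 ≤ ∑ a', p z a' b := Finset.sum_nonneg fun i _ => hp0 z i b
  have a3 : 0 ≤ ∑ a', ∑ b', p z a' b' :=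
    Finset.sum_nonneg fun i _ => Finset.sum_nonneg fun j _ => hp0 z i j
  exact div_nonneg (mul_nonneg a1 a2) a3

lemma q0_sumB (hz : ∀ z, 0 < ∑ a, ∑ b, p z a b) :
    ∀ z a, (∑ b, q0 p z a b) = ∑ b, p z a b := by
  intro z a
  unfold q0
  rw [← Finset.sum_div, ← Finset.mul_sum]
  rw [show (∑ b, ∑ a', p z a' b) = ∑ a', ∑ b', p z a' b' from Finset.sum_comm]
  rw [mul_div_assoc, div_self (ne_of_gt (hz z)), mul_one]

lemma q0_sumA (hz : ∀ z, 0 < ∑ a, ∑ b, p z a b) :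
    ∀ z b, (∑ a, q0 p z a b) = ∑ a, p z a b := by
  intro z b
  unfold q0
  rw [← Finset.sum_div, ← Finset.sum_mul]
  rw [show (∑ a, ∑ b', p z a b') = ∑ a', ∑ b', p z a' b' from rfl]
  rw [mul_comm, mul_div_assoc, div_self (ne_of_gt (hz z)), mul_one]

lemma q0_joint (hp : PID.IsJointDist p) (hz : ∀ z, 0 < ∑ a, ∑ b, p z a b) :
    PID.IsJointDist (q0 p) := by
  obtain ⟨hp0, hp1⟩ := hp
  refine ⟨q0_nonneg p hp0, ?_⟩
  have : ∀ z, (∑ a, ∑ b, q0 p z a b) = ∑ a, ∑ b, p z a b := by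
    intro z
    exact Finset.sum_congr rfl fun a _ => q0_sumB p hz z a
  calc (∑ z, ∑ a, ∑ b, q0 p z a b) = ∑ z, ∑ a, ∑ b, p z a b :=
        Finset.sum_congr rfl fun z _ => this z
    _ = 1 := hp1

lemma q0_same_marg (hz : ∀ z, 0 < ∑ a, ∑ b, p z a b) : PID.SameMarg p (q0 p) :=
  ⟨fun z a => q0_sumB p hz z a, fun z b => q0_sumA p hz z b⟩

open PID in
lemma cmi_q0_le (hp0 : ∀ z a b, 0 ≤ p z a b)
    (hp1 : (∑ z, ∑ a, ∑ b, p z a b) = 1)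
    (hz : ∀ z, 0 < ∑ a, ∑ b, p z a b) :
    cmi (q0 p) ≤ mi2 (fun z a => ∑ b, p z a b) := by
  -- abbreviations (purely notational, written out in full below)
  -- pa z a = ∑ b, p z a b ; pb z b = ∑ a, p z a b ; pz z = ∑ a, ∑ b, p z a b
  -- PA a = ∑ z, ∑ b, p z a b ; PB b = ∑ z, ∑ a, p z a b ; M a b = ∑ z, q0 p z a b
  set c1 : Z → A → ℝ := fun z a =>
    Real.log ((∑ b', p z a b') / ((∑ a', ∑ b', p z a' b') * (∑ z', ∑ b', p z' a b'))) with hc1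
  set c2 : A → B → ℝ := fun a b =>
    Real.log ((∑ z', q0 p z' a b) / ((∑ z', ∑ b', p z' a b') * (∑ z', ∑ a', p z' a' b))) with hc2
  -- Step 1: rewrite the conditioning marginals inside cmi
  have hcmi : cmi (q0 p) = ∑ z, ∑ a, ∑ b, ilog (q0 p z a b)
      ((∑ a', p z a' b) * (∑ z', q0 p z' a b) / (∑ z', ∑ a', p z' a' b)) := by
    unfold cmi
    refine Finset.sum_congr rfl fun z _ => Finset.sum_congr rfl fun a _ =>
      Finset.sum_congr rfl fun b _ => ?_
    rw [q0_sumA p hz z b,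
      show (∑ z', ∑ a', q0 p z' a' b) = ∑ z', ∑ a', p z' a' b from
        Finset.sum_congr rfl fun z' _ => q0_sumA p hz z' b]
  -- Step 2: termwise log decomposition
  have hterm : ∀ z a b, ilog (q0 p z a b)
      ((∑ a', p z a' b) * (∑ z', q0 p z' a b) / (∑ z', ∑ a', p z' a' b))
      = q0 p z a b * c1 z a - q0 p z a b * c2 a b := by
    intro z a b
    by_cases hq : q0 p z a b = 0
    · rw [hq]; simp [ilog]
    · have hpzpos : 0 < ∑ a', ∑ b', p z a' b' := hz z
      have hnum : (∑ b', p z a b') * (∑ a', p z a' b) ≠ 0 := by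
        intro h; exact hq (by simp [q0, h])
      have hpa_pos : 0 < ∑ b', p z a b' :=
        (Finset.sum_nonneg fun i _ => hp0 z a i).lt_of_ne
          (Ne.symm (left_ne_zero_of_mul hnum))
      have hpb_pos : 0 < ∑ a', p z a' b :=
        (Finset.sum_nonneg fun i _ => hp0 z i b).lt_of_ne
          (Ne.symm (right_ne_zero_of_mul hnum))
      have hq_pos : 0 < q0 p z a b := by
        have : q0 p z a b = (∑ b', p z a b') * (∑ a', p z a' b) / (∑ a', ∑ b', p z a' b') := rfl
        rw [this]; exact div_pos (mul_pos hpa_pos hpb_pos) hpzpos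
      have hPA_pos : 0 < ∑ z', ∑ b', p z' a b' :=
        lt_of_lt_of_le hpa_pos (Finset.single_le_sum (f := fun z' => ∑ b', p z' a b')
          (fun i _ => Finset.sum_nonneg fun j _ => hp0 i a j) (Finset.mem_univ z))
      have hPB_pos : 0 < ∑ z', ∑ a', p z' a' b :=
        lt_of_lt_of_le hpb_pos (Finset.single_le_sum (f := fun z' => ∑ a', p z' a' b)
          (fun i _ => Finset.sum_nonneg fun j _ => hp0 i j b) (Finset.mem_univ z))
      have hM_pos : 0 < ∑ z', q0 p z' a b :=
        lt_of_lt_of_le hq_pos (Finset.single_le_sum (f := fun z' => q0 p z' a b)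
          (fun i _ => q0_nonneg p hp0 i a b) (Finset.mem_univ z))
      rw [ilog, if_neg hq, ← mul_sub]
      congr 1
      rw [hc1, hc2]
      simp only
      rw [← Real.log_div (ne_of_gt (div_pos hpa_pos (mul_pos hpzpos hPA_pos)))
        (ne_of_gt (div_pos hM_pos (mul_pos hPA_pos hPB_pos)))]
      congr 1
      have hqeq : q0 p z a b = (∑ b', p z a b') * (∑ a', p z a' b) / (∑ a', ∑ b', p z a' b') := rfl
      rw [hqeq]
      field_simp
  -- Step 3: sum the decomposition
  have hsplit : cmi (q0 p)
      = (∑ z, ∑ a, ∑ b, q0 p z a b * c1 z a) - (∑ z, ∑ a, ∑ b, q0 p z a b * c2 a b) := by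
    rw [hcmi]
    rw [Finset.sum_congr rfl fun z _ => Finset.sum_congr rfl fun a _ =>
      Finset.sum_congr rfl fun b _ => hterm z a b]
    simp only [Finset.sum_sub_distrib]
  -- Step 4: first sum is the mutual information I(Z;A)
  have hA : (∑ z, ∑ a, ∑ b, q0 p z a b * c1 z a) = mi2 (fun z a => ∑ b, p z a b) := by
    simp only [mi2]
    refine Finset.sum_congr rfl fun z _ => Finset.sum_congr rfl fun a _ => ?_
    rw [← Finset.sum_mul, q0_sumB p hz z a]
    by_cases hpa0 : (∑ b, p z a b) = 0
    · rw [hpa0, ilog, if_pos rfl, zero_mul]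
    · rw [ilog, if_neg hpa0, hc1]
  -- Step 5: second sum is I_{Q₀}(A;B) ≥ 0
  have hB : 0 ≤ ∑ z, ∑ a, ∑ b, q0 p z a b * c2 a b := by
    have hre : (∑ z, ∑ a, ∑ b, q0 p z a b * c2 a b)
        = ∑ a, ∑ b, ∑ z, q0 p z a b * c2 a b :=
      Finset.sum_comm.trans (Finset.sum_congr rfl fun a _ => Finset.sum_comm)
    rw [hre]
    have hMc : ∀ a b, (∑ z, q0 p z a b * c2 a b)
        = ilog (∑ z', q0 p z' a b) ((∑ z', ∑ b', p z' a b') * (∑ z', ∑ a', p z' a' b)) := by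
      intro a b
      rw [← Finset.sum_mul]
      by_cases hM0 : (∑ z, q0 p z a b) = 0
      · rw [hM0, ilog, if_pos rfl, zero_mul]
      · rw [ilog, if_neg hM0, hc2]
    rw [Finset.sum_congr rfl fun a _ => Finset.sum_congr rfl fun b _ => hMc a b]
    -- apply Gibbs
    apply sum_ilog_prod_nonneg (fun a b => ∑ z', q0 p z' a b)
      (fun a => ∑ z', ∑ b', p z' a b') (fun b => ∑ z', ∑ a', p z' a' b)
    · intro a b; exact Finset.sum_nonneg fun z _ => q0_nonneg p hp0 z a b
    · intro a; exact Finset.sum_nonneg fun z _ => Finset.sum_nonneg fun b _ => hp0 z a b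
    · intro b; exact Finset.sum_nonneg fun z _ => Finset.sum_nonneg fun a _ => hp0 z a b
    · -- side condition
      intro a b h
      rcases mul_eq_zero.1 h with h' | h'
      · -- PA a = 0
        have hle : (∑ z', q0 p z' a b) ≤ ∑ z', ∑ b', p z' a b' := by
          refine Finset.sum_le_sum fun z _ => ?_
          rw [← q0_sumB p hz z a]
          exact Finset.single_le_sum (f := fun b' => q0 p z a b')
            (fun i _ => q0_nonneg p hp0 z a i) (Finset.mem_univ b)
        exact le_antisymm (h' ▸ hle)
          (Finset.sum_nonneg fun z _ => q0_nonneg p hp0 z a b)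
      · -- PB b = 0
        have hle : (∑ z', q0 p z' a b) ≤ ∑ z', ∑ a', p z' a' b := by
          refine Finset.sum_le_sum fun z _ => ?_
          rw [← q0_sumA p hz z b]
          exact Finset.single_le_sum (f := fun a' => q0 p z a' b)
            (fun i _ => q0_nonneg p hp0 z i b) (Finset.mem_univ a)
        exact le_antisymm (h' ▸ hle)
          (Finset.sum_nonneg fun z _ => q0_nonneg p hp0 z a b)
    · -- total mass of M
      have : (∑ a, ∑ b, ∑ z', q0 p z' a b) = ∑ z, ∑ a, ∑ b, q0 p z a b :=
        (Finset.sum_congr rfl fun a _ => Finset.sum_comm).trans Finset.sum_comm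
      rw [this, Finset.sum_congr rfl fun z _ => Finset.sum_congr rfl fun a _ => q0_sumB p hz z a]
      exact hp1
    · -- ∑ PA = 1
      rw [show (∑ a, ∑ z', ∑ b', p z' a b') = ∑ z, ∑ a, ∑ b, p z a b from Finset.sum_comm]
      exact hp1
    · -- ∑ PB = 1
      rw [show (∑ b, ∑ z', ∑ a', p z' a' b) = ∑ z', ∑ b, ∑ a', p z' a' b from Finset.sum_comm]
      rw [show (∑ z', ∑ b, ∑ a', p z' a' b) = ∑ z, ∑ a, ∑ b, p z a b from
        Finset.sum_congr rfl fun z _ => Finset.sum_comm]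
      exact hp1
  rw [hsplit, hA]
  linarith [hB]

end Q0


/-- the redundant information `Red(Z:A,B) = I(Z;A) - Uni(Z:A|B)` is nonnegative. -/
theorem red_nonneg {Z A B : Type*} [Fintype Z] [Fintype A] [Fintype B]
    (p : Z -> A -> B -> Real) (hp : IsJointDist p)
    (hz : forall z, 0 < Finset.sum Finset.univ fun a => Finset.sum Finset.univ fun b => p z a b) :
    0 <= Red p := by
  obtain ⟨hp0, hp1⟩ := hp
  have hmem : cmi (q0 p) ∈ {r : Real | ∃ q : Z → A → B → ℝ,
      IsJointDist q ∧ SameMarg p q ∧ r = cmi q} :=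
    ⟨q0 p, q0_joint p ⟨hp0, hp1⟩ hz, q0_same_marg p hz, rfl⟩
  have hbdd : BddBelow {r : Real | ∃ q : Z → A → B → ℝ,
      IsJointDist q ∧ SameMarg p q ∧ r = cmi q} := by
    refine ⟨0, ?_⟩
    rintro r ⟨q, hq, -, rfl⟩
    exact PID.cmi_nonneg q hq
  have hUni : Uni p ≤ cmi (q0 p) := csInf_le hbdd hmem
  have hle : cmi (q0 p) ≤ mi2 (fun z a => ∑ b, p z a b) := cmi_q0_le p hp0 hp1 hz
  unfold Red
  linarith
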